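/- For every polynomial f in Poly⁺ (zero constant term), the finitely supported sum Σ_{i≥1} Z(x_i·R_i(∂_i f)) equals f; that is, the operators Z∘x_i∘R_i are creation operators for the divided differences ∂_i. -/
import Mathlib


/-
Conventions: `Pol = MvPolynomial ℕ ℤ` with the Lean variable `X i` representing
the paper's variable `x_{i+1}` (0-indexed).  All operators carrying a paper index
`i ≥ 1` are represented by Lean operators indexed by `i : ℕ` (Lean `i` ↔ paper `i+1`),
and sequences of positive integers are represented by sequences of natural numbers
(entry `v` ↔ paper entry `v+1`).
-/

open MvPolynomial
open scoped Classical

abbrev Pol := MvPolynomial ℕ ℤ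

noncomputable section

/-- Interchange the variables `x_{i+1}` and `x_{i+2}` (paper indexing). -/
def swapVar (i : ℕ) (f : Pol) : Pol := rename (Equiv.swap i (i+1)) f

/-- Exact division: the unique `g` with `d * g = f` when it exists (`0` otherwise). -/
def exactDiv (d f : Pol) : Pol := if h : ∃ g : Pol, d * g = f then h.choose else 0

/-- The divided difference operator `∂_{i+1}` (paper indexing). -/
def ddiff (i : ℕ) (f : Pol) : Pol := exactDiv (X i - X (i+1)) (f - swapVar i f)

/-- The Bergeron–Sottile operator `R_{i+1}` (paper indexing): `x_j ↦ x_j` for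
`j < i+1`, `x_{i+1} ↦ 0`, `x_j ↦ x_{j-1}` for `j > i+1`. -/
def BS (i : ℕ) : Pol →ₐ[ℤ] Pol :=
  aeval fun j => if j < i then X j else if j = i then 0 else X (j-1)

/-- `m`-fold iterate of `BS i`. -/
def BSit (i m : ℕ) (f : Pol) : Pol := (fun g => BS i g)^[m] f

/-- `Z g = Σ_{k ≥ 0} R₁ᵏ g`. -/
def Zop (f : Pol) : Pol := ∑ᶠ k : ℕ, BSit 0 k f

/-- `Z^{(m)} g = Σ_{k ≥ 0} R₁^{km} g`. -/
def Zm (m : ℕ) (f : Pol) : Pol := ∑ᶠ k : ℕ, BSit 0 (k * m) f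

/-- The truncation operator keeping the first `n` variables: `Π_n` in paper indexing. -/
def truncOp (n : ℕ) : Pol →ₐ[ℤ] Pol := aeval fun j => if j < n then X j else 0

/-- The quasisymmetric divided difference `T_{i+1}` defined as the exact quotient
`((R_{i+2} - R_{i+1})f)/x_{i+1}` (paper indexing). -/
def TqDiv (i : ℕ) (f : Pol) : Pol := exactDiv (X i) (BS (i+1) f - BS i f)

/-- The quasisymmetric divided difference `T_{i+1} = R_{i+1} ∘ ∂_{i+1}` (paper indexing). -/
def Tq (i : ℕ) (f : Pol) : Pol := BS i (ddiff i f)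

/-- The `m`-quasisymmetric divided difference `T^{(m)}_{i+1}` (paper indexing). -/
def Tm (m i : ℕ) (f : Pol) : Pol := exactDiv (X i) (BSit (i+1) m f - BSit i m f)

/-- The slide extractor `D_{i+1} = Π_{i+1} ∘ ∂_{i+1}` (paper indexing). -/
def Dop (i : ℕ) (f : Pol) : Pol := truncOp (i+1) (ddiff i f)

/-- The `m`-slide extractor `D^{(m)}_{i+1} = Π_{i+1} ∘ T^{(m)}_{i+1}` (paper indexing). -/
def Dm (m i : ℕ) (f : Pol) : Pol := truncOp (i+1) (Tm m i f)

/-- The slide creator `B_{i+1} f = Σ_{k=1}^{i+1} x_k · R_k^{i+1-k}(Π_{i+1} f)` (paper indexing). -/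
def Bop (i : ℕ) (f : Pol) : Pol :=
  ∑ k ∈ Finset.range (i+1), X k * BSit k (i - k) (truncOp (i+1) f)

/-- The creation operator `Z ∘ x_{i+1} ∘ R_{i+1}` (paper indexing). -/
def crea (i : ℕ) (f : Pol) : Pol := Zop (X i * BS i f)

/-- A permutation of `{0,1,2,…}` is finitely supported if it fixes all but
finitely many points. -/
def FinSupp (w : Equiv.Perm ℕ) : Prop := Set.Finite {x | w x ≠ x}

/-- Coxeter length: the minimal `k` such that `w` is a product of `k` simple
transpositions. -/
def len (w : Equiv.Perm ℕ) : ℕ :=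
  sInf {k | ∃ l : List ℕ, l.length = k ∧ (l.map fun i => Equiv.swap i (i+1)).prod = w}

/-- The set of reduced words for `w`. -/
def Red (w : Equiv.Perm ℕ) : Set (List ℕ) :=
  {l | l.length = len w ∧ (l.map fun i => Equiv.swap i (i+1)).prod = w}

/-- A family of polynomials indexed by permutations is a family of Schubert
polynomials if: each member is homogeneous of degree the length, the identity is
sent to `1`, and divided differences act as expected (all this for finitely
supported permutations). -/
def IsSchubertFamily (S : Equiv.Perm ℕ → Pol) : Prop :=
  (∀ w, FinSupp w → (S w).IsHomogeneous (len w)) ∧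
  S 1 = 1 ∧
  ∀ w, FinSupp w → ∀ i : ℕ,
    ddiff i (S w) = if w (i+1) < w i then S (w * Equiv.swap i (i+1)) else 0

/-- `b` is a compatible sequence for `a`. -/
def Compat {k : ℕ} (a b : Fin k → ℕ) : Prop :=
  Monotone b ∧ (∀ j, b j ≤ a j) ∧
  ∀ (j : ℕ) (h : j + 1 < k),
    a ⟨j, Nat.lt_of_succ_lt h⟩ < a ⟨j+1, h⟩ → b ⟨j, Nat.lt_of_succ_lt h⟩ < b ⟨j+1, h⟩

/-- The slide polynomial `𝔉_a`, as the sum of the monomials of all compatible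
sequences for `a`. -/
def slide {k : ℕ} (a : Fin k → ℕ) : Pol :=
  ∑ᶠ b ∈ {b : Fin k → ℕ | Compat a b}, ∏ j, X (b j)

/-- `b` is an `m`-compatible sequence for `a` (entrywise congruent mod `m`). -/
def MCompat (m : ℕ) {k : ℕ} (a b : Fin k → ℕ) : Prop :=
  Monotone b ∧ (∀ j, b j ≤ a j ∧ b j % m = a j % m) ∧
  ∀ (j : ℕ) (h : j + 1 < k),
    a ⟨j, Nat.lt_of_succ_lt h⟩ < a ⟨j+1, h⟩ → b ⟨j, Nat.lt_of_succ_lt h⟩ < b ⟨j+1, h⟩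

/-- The `m`-slide polynomial `𝔉ᵐ_a`. -/
def mslide (m : ℕ) {k : ℕ} (a : Fin k → ℕ) : Pol :=
  ∑ᶠ b ∈ {b : Fin k → ℕ | MCompat m a b}, ∏ j, X (b j)

/-- Value of the `m`-slide creator `B^{(m)}_{a+1}` (paper indexing) on the monomial with
exponent vector `d`. -/
def BmMono (m a : ℕ) (d : ℕ →₀ ℕ) : Pol :=
  if ∃ t, a < t ∧ d t ≠ 0 then 0
  else monomial (d.erase a) 1 *
    ∑ r ∈ Finset.range (a+1),
      if r * m ≤ a ∧ ∀ t, t < a → d t ≠ 0 → t < a - r * m then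
        X (a - r * m) ^ (d a + 1) else 0

/-- The `m`-slide creator `B^{(m)}_{a+1}` (paper indexing), extended linearly from
its values on monomials. -/
def Bm (m a : ℕ) (f : Pol) : Pol := ∑ d ∈ f.support, C (f.coeff d) * BmMono m a d

end

section Aux

open Classical in
lemma exactDiv_spec {d f : Pol} (h : ∃ g : Pol, d * g = f) : d * exactDiv d f = f := by
  rw [exactDiv, dif_pos h]; exact h.choose_spec

lemma swap_dvd (i : ℕ) (f : Pol) : ∃ g : Pol, (X i - X (i+1)) * g = f - swapVar i f := by
  induction f using MvPolynomial.induction_on with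
  | C a => exact ⟨0, by simp [swapVar, rename_C]⟩
  | add p q hp hq =>
    obtain ⟨g, hg⟩ := hp; obtain ⟨g', hg'⟩ := hq
    exact ⟨g + g', by rw [mul_add, hg, hg']; simp [swapVar, map_add]; ring⟩
  | mul_X p n hp =>
    obtain ⟨g, hg⟩ := hp
    have hc : ∃ c : Pol, (X i - X (i+1)) * c = X n - swapVar i (X (n : ℕ)) := by
      rw [swapVar, rename_X]
      rcases eq_or_ne n i with rfl | h1
      · exact ⟨1, by simp [Equiv.swap_apply_left]⟩
      rcases eq_or_ne n (i+1) with rfl | h2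
      · exact ⟨-1, by rw [Equiv.swap_apply_right]; ring⟩
      · exact ⟨0, by rw [Equiv.swap_apply_of_ne_of_ne h1 h2]; ring⟩
    obtain ⟨c, hc⟩ := hc
    refine ⟨g * X n + swapVar i p * c, ?_⟩
    have hm : swapVar i (p * X n) = swapVar i p * swapVar i (X (n : ℕ)) := by
      simp [swapVar, map_mul]
    rw [hm]
    linear_combination X (n : ℕ) * hg + swapVar i p * hc

lemma ddiff_spec (i : ℕ) (f : Pol) :
    (X i - X (i+1)) * ddiff i f = f - swapVar i f :=
  exactDiv_spec (swap_dvd i f)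

lemma BS_X (i j : ℕ) :
    BS i (X j) = if j < i then X j else if j = i then 0 else X (j-1) := by
  simp [BS]

lemma BS_swap (i : ℕ) (f : Pol) : BS i (swapVar i f) = BS (i+1) f := by
  show (BS i) (rename (Equiv.swap i (i+1)) f) = BS (i+1) f
  rw [BS, BS, aeval_rename]
  have hfun : ((fun j => if j < i then X j else if j = i then 0 else X (j-1)) ∘
      ⇑(Equiv.swap i (i+1))) =
      (fun j => if j < i + 1 then X j else if j = i + 1 then (0 : Pol) else X (j-1)) := by
    funext j
    rcases lt_trichotomy j i with h | heq | h
    · rw [Function.comp_apply, Equiv.swap_apply_of_ne_of_ne (by omega) (by omega)]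
      simp only [if_pos h, if_pos (by omega : j < i + 1)]
    · subst heq
      rw [Function.comp_apply, Equiv.swap_apply_left]
      simp only [if_neg (by omega : ¬ j + 1 < j), if_neg (by omega : ¬ j + 1 = j),
        if_pos (by omega : j < j + 1)]
      congr 1
    · rcases eq_or_ne j (i+1) with heq2 | h2
      · subst heq2
        rw [Function.comp_apply, Equiv.swap_apply_right]
        simp only [if_neg (by omega : ¬ i < i), if_pos rfl,
          if_neg (by omega : ¬ i + 1 < i + 1)]
        simp
      · rw [Function.comp_apply, Equiv.swap_apply_of_ne_of_ne (by omega) (by omega)]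
        simp only [if_neg (by omega : ¬ j < i), if_neg (by omega : ¬ j = i),
          if_neg (by omega : ¬ j < i + 1), if_neg h2]
  rw [hfun]

lemma lemA (i : ℕ) (f : Pol) :
    X i * BS i (ddiff i f) = BS (i+1) f - BS i f := by
  have h := congrArg (BS i) (ddiff_spec i f)
  rw [map_mul, map_sub, map_sub, BS_swap, BS_X, BS_X] at h
  simp only [lt_irrefl, if_neg (by omega : ¬ i < i), if_pos rfl,
    if_neg (by omega : ¬ i + 1 < i), if_neg (by omega : ¬ i + 1 = i)] at h
  have : (0 - X i : Pol) * BS i (ddiff i f) = BS i f - BS (i+1) f := h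
  linear_combination -this

-- supported machinery
lemma exists_supp (f : Pol) : ∃ N : ℕ, f ∈ supported ℤ (Set.Iio N) := by
  refine ⟨(f.vars.sup id) + 1, ?_⟩
  rw [mem_supported]
  intro j hj
  simp only [Set.mem_Iio]
  have : j ≤ f.vars.sup id := Finset.le_sup (f := id) (by simpa using hj)
  omega

lemma supported_stable {s : Set ℕ} {f : Pol} (hf : f ∈ supported ℤ s)
    (φ : Pol →ₐ[ℤ] Pol) (t : Set ℕ) (h : ∀ j ∈ s, φ (X j) ∈ supported ℤ t) :
    φ f ∈ supported ℤ t := by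
  rw [supported_eq_adjoin_X] at hf
  have : f ∈ (supported ℤ t).comap φ := by
    refine Algebra.adjoin_le ?_ hf
    rintro _ ⟨j, hj, rfl⟩
    exact h j hj
  exact this

lemma BS_mem_supported {n i : ℕ} {f : Pol} (hf : f ∈ supported ℤ (Set.Iio n)) :
    BS i f ∈ supported ℤ (Set.Iio n) := by
  refine supported_stable hf (BS i) _ ?_
  intro j hj
  simp only [Set.mem_Iio] at hj
  rw [BS_X]
  split_ifs with h1 h2
  · exact X_mem_supported (R := ℤ) |>.2 (by simp only [Set.mem_Iio]; omega)
  · exact Subalgebra.zero_mem _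
  · exact X_mem_supported (R := ℤ) |>.2 (by simp only [Set.mem_Iio]; omega)

lemma BS0_mem_supported {n : ℕ} {f : Pol} (hf : f ∈ supported ℤ (Set.Iio (n+1))) :
    BS 0 f ∈ supported ℤ (Set.Iio n) := by
  refine supported_stable hf (BS 0) _ ?_
  intro j hj
  simp only [Set.mem_Iio] at hj
  rw [BS_X]
  split_ifs with h1 h2
  · omega
  · exact Subalgebra.zero_mem _
  · exact X_mem_supported (R := ℤ) |>.2 (by simp only [Set.mem_Iio]; omega)

lemma BS_eq_self {n i : ℕ} {f : Pol} (hf : f ∈ supported ℤ (Set.Iio n)) (h : n ≤ i) :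
    BS i f = f := by
  rw [supported_eq_adjoin_X] at hf
  have : f ∈ AlgHom.equalizer (BS i) (AlgHom.id ℤ Pol) := by
    refine Algebra.adjoin_le ?_ hf
    rintro _ ⟨j, hj, rfl⟩
    simp only [Set.mem_Iio] at hj
    show BS i (X j) = X j
    rw [BS_X, if_pos (by omega)]
  exact this

lemma constantCoeff_BS (i : ℕ) (f : Pol) :
    constantCoeff (BS i f) = constantCoeff f := by
  have : (constantCoeff (R := ℤ) (σ := ℕ)).comp (BS i).toRingHom
      = constantCoeff (R := ℤ) (σ := ℕ) := by
    apply MvPolynomial.ringHom_ext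
    · intro a; simp [BS]
    · intro j
      simp only [RingHom.comp_apply, AlgHom.toRingHom_eq_coe, RingHom.coe_coe]
      rw [BS_X]
      split_ifs <;> simp
  exact RingHom.congr_fun this f

-- BSit lemmas
lemma BSit_succ (i m : ℕ) (f : Pol) : BSit i (m+1) f = BSit i m (BS i f) := by
  simp [BSit, Function.iterate_succ_apply]

lemma BSit_add (i m k : ℕ) (f : Pol) : BSit i (m+k) f = BSit i m (BSit i k f) := by
  simp [BSit, Function.iterate_add_apply]

lemma BSit_zero_poly (i m : ℕ) : BSit i m (0 : Pol) = 0 := by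
  induction m with
  | zero => rfl
  | succ m ih => rw [BSit_succ, map_zero, ih]

lemma BSit_sub (i m : ℕ) (f g : Pol) : BSit i m (f - g) = BSit i m f - BSit i m g := by
  induction m generalizing f g with
  | zero => rfl
  | succ m ih => rw [BSit_succ, BSit_succ, BSit_succ, map_sub, ih]

lemma BSit_vanish {n : ℕ} {f : Pol} (hf : f ∈ supported ℤ (Set.Iio n))
    (h0 : constantCoeff f = 0) : BSit 0 n f = 0 := by
  induction n generalizing f with
  | zero =>
    have hio : Set.Iio (0:ℕ) = (∅ : Set ℕ) := by ext x; simp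
    have : f ∈ (⊥ : Subalgebra ℤ Pol) := by
      rw [← supported_empty (R := ℤ) (σ := ℕ), ← hio]
      exact hf
    obtain ⟨c, hc⟩ := Algebra.mem_bot.mp this
    have : f = C c := by rw [← hc]; rfl
    subst this
    simp only [constantCoeff_C] at h0
    simp [BSit, h0]
  | succ n ih =>
    have h1 : BSit 0 (n+1) f = BSit 0 n (BS 0 f) := BSit_succ 0 n f
    rw [h1]
    exact ih (BS0_mem_supported hf) (by rw [constantCoeff_BS]; exact h0)

lemma BSit_vanish_ge {n k : ℕ} {f : Pol} (hf : f ∈ supported ℤ (Set.Iio n))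
    (h0 : constantCoeff f = 0) (h : n ≤ k) : BSit 0 k f = 0 := by
  obtain ⟨m, rfl⟩ := Nat.exists_eq_add_of_le h
  rw [add_comm, BSit_add, BSit_vanish hf h0, BSit_zero_poly]

lemma Zop_eq_sum {n : ℕ} {f : Pol} (hf : f ∈ supported ℤ (Set.Iio n))
    (h0 : constantCoeff f = 0) :
    Zop f = ∑ k ∈ Finset.range n, BSit 0 k f := by
  rw [Zop]
  apply finsum_eq_finset_sum_of_support_subset
  intro k hk
  simp only [Function.mem_support] at hk
  simp only [Finset.coe_range, Set.mem_Iio]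
  by_contra h
  exact hk (BSit_vanish_ge hf h0 (by omega))

lemma Zop_support_finite {n : ℕ} {f : Pol} (hf : f ∈ supported ℤ (Set.Iio n))
    (h0 : constantCoeff f = 0) :
    (Function.support fun k => BSit 0 k f).Finite := by
  apply Set.Finite.subset (Set.finite_Iio n)
  intro k hk
  simp only [Function.mem_support] at hk
  simp only [Set.mem_Iio]
  by_contra h
  exact hk (BSit_vanish_ge hf h0 (by omega))

lemma Zop_sub {n : ℕ} {f g : Pol} (hf : f ∈ supported ℤ (Set.Iio n))
    (h0f : constantCoeff f = 0) (hg : g ∈ supported ℤ (Set.Iio n))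
    (h0g : constantCoeff g = 0) :
    Zop (f - g) = Zop f - Zop g := by
  unfold Zop
  have : (fun k => BSit 0 k (f - g)) = fun k => BSit 0 k f - BSit 0 k g := by
    funext k; exact BSit_sub 0 k f g
  rw [this]
  exact finsum_sub_distrib (Zop_support_finite hf h0f) (Zop_support_finite hg h0g)

end Aux

/-- for every `f` with no constant term, the finitely supported sum
`Σ_{i≥1} Z(x_i·R_i(∂_i f))` equals `f`; the `Z∘x_i∘R_i` are creation operators for `∂_i`. -/
theorem stmt_1 (f : Pol) (hf : constantCoeff f = 0) :
    {i : ℕ | Zop (X i * BS i (ddiff i f)) ≠ 0}.Finite ∧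
    ∑ᶠ i : ℕ, Zop (X i * BS i (ddiff i f)) = f := by
  obtain ⟨N, hN⟩ := exists_supp f
  have hBS : ∀ i : ℕ, BS i f ∈ supported ℤ (Set.Iio N) := fun i => BS_mem_supported hN
  have hcc : ∀ i : ℕ, constantCoeff (BS i f) = 0 := fun i => (constantCoeff_BS i f).trans hf
  have hZ0 : Zop (0 : Pol) = 0 := by
    rw [Zop]
    have : (fun k => BSit 0 k (0 : Pol)) = fun _ => (0 : Pol) := by
      funext k; exact BSit_zero_poly 0 k
    rw [this, finsum_zero]
  have hterm : ∀ i, Zop (X i * BS i (ddiff i f)) = Zop (BS (i+1) f) - Zop (BS i f) := by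
    intro i
    rw [lemA, Zop_sub (hBS (i+1)) (hcc (i+1)) (hBS i) (hcc i)]
  have hsupp : ∀ i, N ≤ i → Zop (X i * BS i (ddiff i f)) = 0 := by
    intro i hi
    rw [lemA, BS_eq_self hN (by omega), BS_eq_self hN hi, sub_self, hZ0]
  constructor
  · apply Set.Finite.subset (Set.finite_Iio N)
    intro i hi
    simp only [Set.mem_setOf_eq] at hi
    simp only [Set.mem_Iio]
    by_contra h
    exact hi (hsupp i (by omega))
  · have hsub : (Function.support fun i => Zop (X i * BS i (ddiff i f)))
        ⊆ ↑(Finset.range N) := by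
      intro i hi
      simp only [Function.mem_support] at hi
      simp only [Finset.coe_range, Set.mem_Iio]
      by_contra h
      exact hi (hsupp i (by omega))
    rw [finsum_eq_finset_sum_of_support_subset _ hsub]
    have hmono : supported ℤ (Set.Iio N) ≤ supported ℤ (Set.Iio (N+1)) :=
      supported_mono (Set.Iio_subset_Iio (Nat.le_succ N))
    have h1 : Zop f = ∑ k ∈ Finset.range (N+1), BSit 0 k f :=
      Zop_eq_sum (hmono hN) hf
    have h2 : Zop (BS 0 f) = ∑ k ∈ Finset.range (N+1), BSit 0 (k+1) f := by
      rw [Zop_eq_sum (hmono (hBS 0)) (hcc 0)]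
      exact Finset.sum_congr rfl fun k _ => (BSit_succ 0 k f).symm
    calc ∑ i ∈ Finset.range N, Zop (X i * BS i (ddiff i f))
        = ∑ i ∈ Finset.range N, (Zop (BS (i+1) f) - Zop (BS i f)) :=
          Finset.sum_congr rfl fun i _ => hterm i
      _ = Zop (BS N f) - Zop (BS 0 f) := Finset.sum_range_sub (fun i => Zop (BS i f)) N
      _ = Zop f - Zop (BS 0 f) := by rw [BS_eq_self hN le_rfl]
      _ = ∑ k ∈ Finset.range (N+1), (BSit 0 k f - BSit 0 (k+1) f) := by
          rw [h1, h2, Finset.sum_sub_distrib]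
      _ = BSit 0 0 f - BSit 0 (N+1) f := Finset.sum_range_sub' (fun k => BSit 0 k f) (N+1)
      _ = f := by
          have hv : BSit 0 (N+1) f = 0 := BSit_vanish_ge hN hf (by omega)
          rw [hv, sub_zero]
          rfl
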